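/- Let σ>0, C>0 and A<0 with A+C>0, and set ρ_{L,0} = 1 − C/√L, ρ_{L,1} = 1 − A/√L (so ρ_{L,1} > 1). Let D_L = (ρ_{L,1} − ρ_{L,1}^{−1}) · (ρ_{L,1} + ρ_{L,1}^{−1} + σ)^L / [(ρ_{L,1} − ρ_{L,0})(1 − ρ_{L,0}ρ_{L,1})]. Then lim_{L→∞} D_L / ((2+σ)^L √L) = 2A e^{A²/(2+σ)} / (A² − C²). -/

import Mathlib

open Real Filter Topology

noncomputable section

set_option maxHeartbeats 1000000 in
/-- Asymptotics of the atomic contribution `D_L` to the normalizing constant,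
when `A < 0 < C` and `A + C > 0`:
`D_L / ((2+σ)^L √L) → 2A e^{A²/(2+σ)} / (A² − C²)`. -/
theorem statement7 (σ A C : ℝ) (hσ : 0 < σ) (hC : 0 < C) (hA : A < 0) (hAC : 0 < A + C) :
    Tendsto
      (fun L : ℕ =>
        (((1 - A / Real.sqrt L) - (1 - A / Real.sqrt L)⁻¹) *
            ((1 - A / Real.sqrt L) + (1 - A / Real.sqrt L)⁻¹ + σ) ^ L /
            (((1 - A / Real.sqrt L) - (1 - C / Real.sqrt L)) *
              (1 - (1 - C / Real.sqrt L) * (1 - A / Real.sqrt L)))) /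
          ((2 + σ) ^ L * Real.sqrt L))
      atTop
      (𝓝 (2 * A * Real.exp (A ^ 2 / (2 + σ)) / (A ^ 2 - C ^ 2))) := by
  have h2σ : (0:ℝ) < 2 + σ := by linarith
  have hA0 : A ≠ 0 := ne_of_lt hA
  have hCA : (0:ℝ) < C - A := by linarith
  have hA2 : (0:ℝ) < A ^ 2 := by positivity
  have hA2C2 : A ^ 2 < C ^ 2 := by nlinarith
  set t : ℝ := A ^ 2 / (2 + σ) with ht
  -- basic tendsto facts
  have hsqrt : Tendsto (fun L : ℕ => Real.sqrt L) atTop atTop := by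
    have h := (tendsto_rpow_atTop (by norm_num : (0:ℝ) < 1/2)).comp
      tendsto_natCast_atTop_atTop
    exact h.congr fun L => (Real.sqrt_eq_rpow _).symm
  have hinv : Tendsto (fun L : ℕ => (Real.sqrt L)⁻¹) atTop (𝓝 0) :=
    hsqrt.inv_tendsto_atTop
  -- auxiliary sequences
  set F : ℕ → ℝ := fun L =>
    (-(2*A) + A^2 * (Real.sqrt L)⁻¹) /
      ((1 - A / Real.sqrt L) * ((C - A) * ((A + C) - A * C * (Real.sqrt L)⁻¹))) with hF
  set x : ℕ → ℝ := fun L => A^2 / ((2 + σ) * (1 - A / Real.sqrt L) * L) with hx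
  set G : ℕ → ℝ := fun L => (1 + x L) ^ L with hG
  -- ρ1 → 1
  have hρ1 : Tendsto (fun L : ℕ => 1 - A / Real.sqrt L) atTop (𝓝 1) := by
    have : Tendsto (fun L : ℕ => A / Real.sqrt L) atTop (𝓝 0) := by
      simpa [div_eq_mul_inv] using hinv.const_mul A
    simpa using (tendsto_const_nhds (x := (1:ℝ))).sub this
  -- eventual positivity of √L
  have hev : ∀ᶠ L : ℕ in atTop, (1:ℝ) ≤ Real.sqrt L := by
    filter_upwards [eventually_ge_atTop 1] with L hL
    rw [show (1:ℝ) = Real.sqrt 1 by simp]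
    exact Real.sqrt_le_sqrt (by exact_mod_cast hL)
  -- F tendsto
  have hFlim : Tendsto F atTop (𝓝 (-(2*A) / ((C - A) * (A + C)))) := by
    have hnum : Tendsto (fun L : ℕ => -(2*A) + A^2 * (Real.sqrt L)⁻¹) atTop (𝓝 (-(2*A))) := by
      simpa using (tendsto_const_nhds (x := -(2*A))).add (hinv.const_mul (A^2))
    have hden : Tendsto (fun L : ℕ =>
        (1 - A / Real.sqrt L) * ((C - A) * ((A + C) - A * C * (Real.sqrt L)⁻¹)))
        atTop (𝓝 (1 * ((C - A) * ((A + C) - 0)))) := by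
      refine hρ1.mul (Tendsto.const_mul _ ?_)
      simpa using (tendsto_const_nhds (x := A + C)).sub (hinv.const_mul (A*C))
    have hden' : (1:ℝ) * ((C - A) * ((A + C) - 0)) ≠ 0 := by
      have : (0:ℝ) < (C - A) * (A + C) := mul_pos hCA hAC
      simpa using ne_of_gt this
    have h := hnum.div hden hden'
    rw [one_mul, sub_zero] at h
    exact h
  -- x is eventually positive
  have hxpos : ∀ᶠ L : ℕ in atTop, 0 < x L := by
    filter_upwards [hev, eventually_ge_atTop 1] with L h1 hL1
    have hs : (0:ℝ) < Real.sqrt L := lt_of_lt_of_le one_pos h1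
    have hρ : (0:ℝ) < 1 - A / Real.sqrt L := by
      have : A / Real.sqrt L < 0 := div_neg_of_neg_of_pos hA hs
      linarith
    have hL : (0:ℝ) < (L:ℝ) := by exact_mod_cast hL1
    exact div_pos hA2 (by positivity)
  -- L * x L → t
  have hLx : Tendsto (fun L : ℕ => (L:ℝ) * x L) atTop (𝓝 t) := by
    have h1 : Tendsto (fun L : ℕ => A^2 / ((2 + σ) * (1 - A / Real.sqrt L)))
        atTop (𝓝 (A^2 / ((2 + σ) * 1))) := by
      refine tendsto_const_nhds.div ((tendsto_const_nhds (x := 2+σ)).mul hρ1) ?_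
      simpa using ne_of_gt h2σ
    have heq : ∀ᶠ L : ℕ in atTop, (L:ℝ) * x L
        = A^2 / ((2 + σ) * (1 - A / Real.sqrt L)) := by
      filter_upwards [hev, eventually_ge_atTop 1] with L h1' hL1
      have hs : (0:ℝ) < Real.sqrt L := lt_of_lt_of_le one_pos h1'
      have hρ : (0:ℝ) < 1 - A / Real.sqrt L := by
        have : A / Real.sqrt L < 0 := div_neg_of_neg_of_pos hA hs
        linarith
      have hL : (L:ℝ) ≠ 0 := by positivity
      have hsA : Real.sqrt L - A ≠ 0 := by nlinarith
      simp only [hx]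
      field_simp
    have h2 := Tendsto.congr' (heq.mono fun _ h => h.symm) h1
    simpa [ht] using h2
  -- x → 0
  have hx0 : Tendsto x atTop (𝓝 0) := by
    have hden : Tendsto (fun L : ℕ => (2 + σ) * (1 - A / Real.sqrt L) * (L:ℝ)) atTop atTop := by
      have hc : Tendsto (fun L : ℕ => (2 + σ) * (1 - A / Real.sqrt L)) atTop (𝓝 ((2+σ)*1)) :=
        tendsto_const_nhds.mul hρ1
      exact (Tendsto.pos_mul_atTop (by linarith) hc tendsto_natCast_atTop_atTop)
    exact tendsto_const_nhds.div_atTop hden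
  -- G → exp t
  have hGlim : Tendsto G atTop (𝓝 (Real.exp t)) := by
    -- slope of log at 1
    have hslope : Tendsto (fun y : ℝ => Real.log y / (y - 1)) (𝓝[≠] (1:ℝ)) (𝓝 1) := by
      have h := hasDerivAt_iff_tendsto_slope.mp (Real.hasDerivAt_log one_ne_zero)
      simp only [inv_one] at h
      refine h.congr fun y => ?_
      rw [slope_def_field, Real.log_one, sub_zero]
    have h1x : Tendsto (fun L : ℕ => 1 + x L) atTop (𝓝[≠] (1:ℝ)) := by
      rw [tendsto_nhdsWithin_iff]
      constructor
      · simpa using tendsto_const_nhds.add hx0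
      · filter_upwards [hxpos] with L hL
        simp only [Set.mem_compl_iff, Set.mem_singleton_iff]
        intro h
        nlinarith
    have hlogx : Tendsto (fun L : ℕ => Real.log (1 + x L) / x L) atTop (𝓝 1) := by
      have := hslope.comp h1x
      refine this.congr fun L => ?_
      simp [Function.comp]
    have hmain : Tendsto (fun L : ℕ => (L:ℝ) * Real.log (1 + x L)) atTop (𝓝 t) := by
      have h := hLx.mul hlogx
      rw [mul_one] at h
      refine Tendsto.congr' ?_ h
      filter_upwards [hxpos] with L hL
      field_simp
    have := (Real.continuous_exp.tendsto t).comp hmain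
    refine Tendsto.congr' ?_ this
    filter_upwards [hxpos] with L hL
    have h1 : (0:ℝ) < 1 + x L := by linarith
    simp only [Function.comp, hG]
    rw [← Real.log_pow, Real.exp_log (by positivity)]
  -- combine
  have hval : -(2*A)/((C-A)*(A+C)) * Real.exp t = 2*A*Real.exp t/(A^2 - C^2) := by
    have h1 : (C-A)*(A+C) ≠ 0 := by positivity
    have h2 : A^2 - C^2 ≠ 0 := by nlinarith
    field_simp
    ring
  have hFG := hFlim.mul hGlim
  rw [hval] at hFG
  refine Tendsto.congr' ?_ hFG
  filter_upwards [hev, eventually_ge_atTop 1] with L h1 hL1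
  simp only [hG, hF, hx]
  set S : ℝ := Real.sqrt L with hSdef
  have hs0 : (0:ℝ) < S := lt_of_lt_of_le one_pos h1
  have hsq : (L:ℝ) = S ^ 2 := (Real.sq_sqrt (Nat.cast_nonneg L)).symm
  rw [hsq]
  have hS0 : S ≠ 0 := ne_of_gt hs0
  have hsA : S - A ≠ 0 := by nlinarith
  have hsC : (0:ℝ) < (A + C) * S - A * C := by nlinarith
  have hρpos : (0:ℝ) < 1 - A / S := by
    have : A / S < 0 := div_neg_of_neg_of_pos hA hs0
    linarith
  have hW : ((2:ℝ) + σ) ^ L ≠ 0 := pow_ne_zero _ (ne_of_gt h2σ)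
  have hP : (1 - A / S) + (1 - A / S)⁻¹ + σ
      = (2 + σ) * (1 + A ^ 2 / ((2 + σ) * (1 - A / S) * S ^ 2)) := by
    field_simp
    ring
  rw [hP, mul_pow]
  have hρeq : 1 - A / S = (S - A) / S := by field_simp
  have hN : (1 - A / S) - (1 - A / S)⁻¹ = (A ^ 2 - 2 * A * S) / (S * (S - A)) := by
    rw [hρeq, inv_div]
    field_simp
    ring
  have hD1 : (1 - A / S) - (1 - C / S) = (C - A) / S := by field_simp; ring
  have hD2 : 1 - (1 - C / S) * (1 - A / S) = ((A + C) * S - A * C) / S ^ 2 := by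
    field_simp
    ring
  have hF3 : (A + C) - A * C * S⁻¹ = ((A + C) * S - A * C) / S := by field_simp
  have hW : ((2:ℝ) + σ) ^ L ≠ 0 := pow_ne_zero _ (ne_of_gt h2σ)
  generalize (1 + A ^ 2 / ((2 + σ) * (1 - A / S) * S ^ 2)) ^ L = Q
  generalize hWQ : ((2:ℝ) + σ) ^ L = W at hW ⊢
  rw [hN, hD1, hD2, hF3, hρeq]
  rw [div_div]
  field_simp
  ring
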